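/- Gibbs–de Finetti lower bound: for every Borel probability measure μ on Ω and every N ≥ n, p(N) ≥ g(μ) := S₁(μ) − Φ(μ), where S₁(μ) is the relative entropy of μ with respect to α (sign convention S₁(μ) = −∫(dμ/dα)log(dμ/dα)dα) and Φ(μ) = μ^{⊗n}(φ). -/

import Mathlib

open MeasureTheory Filter
open scoped ENNReal Classical

/-- `e^{-x}` for `x : EReal`, with values in `ℝ≥0∞` (so `e^{-⊤} = 0`, `e^{-⊥} = ∞`). -/
noncomputable def expNeg (x : EReal) : ℝ≥0∞ :=
  if x = ⊤ then 0 else if x = ⊥ then ⊤ else ENNReal.ofReal (Real.exp (-x.toReal))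

section Aux

lemma expNeg_coe (r : ℝ) : expNeg (r : EReal) = ENNReal.ofReal (Real.exp (-r)) := by
  rw [expNeg, if_neg (EReal.coe_ne_top r), if_neg (EReal.coe_ne_bot r), EReal.toReal_coe]

lemma ereal_sum_coe {ι : Type*} (s : Finset ι) (f : ι → EReal)
    (h : ∀ i ∈ s, f i ≠ ⊥ ∧ f i ≠ ⊤) :
    (∑ i ∈ s, f i) = ((∑ i ∈ s, (f i).toReal : ℝ) : EReal) := by
  classical
  induction s using Finset.induction with
  | empty => simp
  | @insert a s ha ih =>
    rw [Finset.sum_insert ha, Finset.sum_insert ha,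
      ih (fun i hi => h i (Finset.mem_insert_of_mem hi)), EReal.coe_add,
      EReal.coe_toReal (h a (Finset.mem_insert_self a s)).2 (h a (Finset.mem_insert_self a s)).1]

lemma ereal_sum_ne_bot {ι : Type*} (s : Finset ι) (f : ι → EReal)
    (h : ∀ i ∈ s, f i ≠ ⊥) : (∑ i ∈ s, f i) ≠ ⊥ := by
  classical
  induction s using Finset.induction with
  | empty => simp
  | @insert a s ha ih =>
    rw [Finset.sum_insert ha]
    intro hc
    rcases EReal.add_eq_bot_iff.1 hc with hc | hc
    · exact h a (Finset.mem_insert_self a s) hc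
    · exact ih (fun i hi => h i (Finset.mem_insert_of_mem hi)) hc

lemma ereal_sum_eq_top {ι : Type*} (s : Finset ι) (f : ι → EReal)
    (h : ∀ i ∈ s, f i ≠ ⊥) {a : ι} (ha : a ∈ s) (hatop : f a = ⊤) :
    (∑ i ∈ s, f i) = ⊤ := by
  classical
  rw [← Finset.add_sum_erase _ _ ha, hatop]
  exact EReal.top_add_of_ne_bot
    (ereal_sum_ne_bot _ _ fun i hi => h i (Finset.mem_of_mem_erase hi))

lemma expNeg_mul_sum {ι : Type*} [Fintype ι] (τ : ι → EReal) (hnb : ∀ i, τ i ≠ ⊥)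
    {r : ℝ} (hr : 0 < r) :
    expNeg ((r : EReal) * ∑ i, τ i)
      = if ∃ i, τ i = ⊤ then 0
        else ENNReal.ofReal (Real.exp (-(r * ∑ i, (τ i).toReal))) := by
  by_cases h : ∃ i, τ i = ⊤
  · obtain ⟨i, hi⟩ := h
    rw [ereal_sum_eq_top Finset.univ τ (fun i _ => hnb i) (Finset.mem_univ i) hi,
      EReal.mul_top_of_pos (by exact_mod_cast hr), if_pos ⟨i, hi⟩]
    rfl
  · push_neg at h
    rw [ereal_sum_coe Finset.univ τ (fun i _ => ⟨hnb i, h i⟩), ← EReal.coe_mul, expNeg_coe,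
      if_neg (by push_neg; exact h)]

lemma lintegral_pi_prod {ι : Type*} [Fintype ι] {Ω : ι → Type*} [∀ i, MeasurableSpace (Ω i)]
    (μ : ∀ i, Measure (Ω i)) [∀ i, SigmaFinite (μ i)] (g : ∀ i, Ω i → ℝ≥0∞)
    (hg : ∀ i, Measurable (g i)) :
    ∫⁻ x, ∏ i, g i (x i) ∂Measure.pi μ = ∏ i, ∫⁻ y, g i y ∂μ i := by
  have hF : Measurable fun x : ∀ i, Ω i => ∏ i, g i (x i) :=
    Finset.measurable_prod _ fun i _ => (hg i).comp (measurable_pi_apply i)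
  have key : ∀ s : Finset ι, ∀ x : ∀ i, Ω i,
      (∫⋯∫⁻_s, (fun y => ∏ i, g i (y i)) ∂μ) x
        = (∏ i ∈ s, ∫⁻ y, g i y ∂μ i) * ∏ i ∈ sᶜ, g i (x i) := by
    intro s
    induction s using Finset.induction with
    | empty => intro x; simp
    | @insert i s hi ih =>
      intro x
      rw [lmarginal_insert _ hF hi]
      simp only [ih]
      have hcompl : (insert i s)ᶜ = sᶜ.erase i := by
        ext k; simp [Finset.mem_erase, Finset.mem_compl, Finset.mem_insert, and_comm]
      have hic : i ∈ sᶜ := Finset.mem_compl.2 hi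
      calc ∫⁻ xᵢ, (∏ k ∈ s, ∫⁻ y, g k y ∂μ k) * ∏ k ∈ sᶜ, g k (Function.update x i xᵢ k) ∂μ i
          = ∫⁻ xᵢ, (∏ k ∈ s, ∫⁻ y, g k y ∂μ k) * ((∏ k ∈ sᶜ.erase i, g k (x k)) * g i xᵢ) ∂μ i := by
            congr 1; ext xᵢ
            congr 1
            rw [← Finset.prod_erase_mul _ _ hic]
            congr 1
            · exact Finset.prod_congr rfl fun k hk =>
                by rw [Function.update_of_ne (Finset.mem_erase.1 hk).1]
            · rw [Function.update_self]
        _ = (∏ i ∈ insert i s, ∫⁻ y, g i y ∂μ i) * ∏ i ∈ (insert i s)ᶜ, g i (x i) := by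
            rw [lintegral_const_mul _ ((hg i).const_mul _), lintegral_const_mul _ (hg i),
              Finset.prod_insert hi, hcompl]
            ring
  rcases isEmpty_or_nonempty (∀ i, Ω i) with h | ⟨⟨x⟩⟩
  · have : ∃ i, IsEmpty (Ω i) := by
      by_contra h2
      push_neg at h2
      exact h.false (fun i => (h2 i).some)
    obtain ⟨i, hi⟩ := this
    rw [lintegral_of_isEmpty]
    have : ∫⁻ y, g i y ∂μ i = 0 := lintegral_of_isEmpty _ _
    rw [Finset.prod_eq_zero (Finset.mem_univ i) this]
  · rw [lintegral_eq_lmarginal_univ x, key Finset.univ x]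
    simp

lemma pi_map_eval {ι : Type*} [Fintype ι] {Ω : Type*} [MeasurableSpace Ω]
    (μ : Measure Ω) [IsProbabilityMeasure μ] (i : ι) :
    Measure.map (fun x : ι → Ω => x i) (Measure.pi fun _ => μ) = μ := by
  ext A hA
  rw [Measure.map_apply (measurable_pi_apply i) hA]
  have : (fun x : ι → Ω => x i) ⁻¹' A
      = Set.pi Set.univ (fun k => if k = i then A else Set.univ) := by
    ext x
    simp only [Set.mem_preimage, Set.mem_pi, Set.mem_univ, forall_true_left]
    constructor
    · intro h k
      by_cases hk : k = i
      · subst hk; simpa using h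
      · simp [hk]
    · intro h
      have := h i
      simpa using this
  rw [this, Measure.pi_pi]
  rw [Finset.prod_eq_single i (fun k _ hk => by simp [hk]) (by simp)]
  simp

lemma map_comp_pi {n N : ℕ} {Ω : Type*} [MeasurableSpace Ω]
    (μ : Measure Ω) [IsProbabilityMeasure μ] (j : Fin n → Fin N) (hj : Function.Injective j) :
    Measure.map (fun x : Fin N → Ω => x ∘ j) (Measure.pi fun _ => μ)
      = Measure.pi (fun _ : Fin n => μ) := by
  refine (Measure.pi_eq fun s hs => ?_).symm
  have hcomp : Measurable fun x : Fin N → Ω => x ∘ j :=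
    measurable_pi_lambda _ fun i => measurable_pi_apply (j i)
  rw [Measure.map_apply hcomp (MeasurableSet.univ_pi hs)]
  set t : Fin N → Set Ω := fun k => if h : ∃ i, j i = k then s h.choose else Set.univ with ht
  have htj : ∀ i, t (j i) = s i := by
    intro i
    have hex : ∃ i', j i' = j i := ⟨i, rfl⟩
    rw [ht]
    simp only [dif_pos hex]
    rw [hj hex.choose_spec]
  have hpre : (fun x : Fin N → Ω => x ∘ j) ⁻¹' Set.pi Set.univ s = Set.pi Set.univ t := by
    ext x
    simp only [Set.mem_preimage, Set.mem_pi, Set.mem_univ, forall_true_left, Function.comp]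
    constructor
    · intro h k
      rw [ht]
      by_cases hk : ∃ i, j i = k
      · simp only [dif_pos hk]
        have h2 := h hk.choose
        rwa [hk.choose_spec] at h2
      · simp [dif_neg hk]
    · intro h i
      have := h (j i)
      rwa [htj] at this
  rw [hpre, Measure.pi_pi]
  have h1 : ∀ k ∉ Finset.univ.image j, μ (t k) = 1 := by
    intro k hk
    have : ¬∃ i, j i = k := by
      intro ⟨i, hi⟩
      exact hk (Finset.mem_image.2 ⟨i, Finset.mem_univ i, hi⟩)
    rw [ht]; simp [dif_neg this]
  rw [← Finset.prod_subset (Finset.subset_univ (Finset.univ.image j)) (fun k _ hk => h1 k hk)]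
  rw [Finset.prod_image (fun a _ b _ h => hj h)]
  exact Finset.prod_congr rfl fun i _ => by rw [htj]

lemma pi_withDensity {ι : Type*} [Fintype ι] {Ω : Type*} [MeasurableSpace Ω]
    (m μ : Measure Ω) [IsProbabilityMeasure m] [IsProbabilityMeasure μ]
    {f : Ω → ℝ≥0∞} (hf : Measurable f) (h : m.withDensity f = μ) :
    (Measure.pi fun _ : ι => μ)
      = (Measure.pi fun _ : ι => m).withDensity fun x => ∏ i, f (x i) := by
  refine Measure.pi_eq fun s hs => ?_
  rw [withDensity_apply _ (MeasurableSet.univ_pi hs)]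
  rw [← lintegral_indicator (MeasurableSet.univ_pi hs)]
  have : ∀ x : ι → Ω, (Set.pi Set.univ s).indicator (fun x => ∏ i, f (x i)) x
      = ∏ i, (s i).indicator f (x i) := by
    intro x
    by_cases hx : x ∈ Set.pi Set.univ s
    · rw [Set.indicator_of_mem hx]
      exact Finset.prod_congr rfl fun i _ =>
        (Set.indicator_of_mem (hx i (Set.mem_univ i)) f).symm
    · rw [Set.indicator_of_notMem hx]
      rw [Set.mem_pi] at hx
      push_neg at hx
      obtain ⟨i, _, hi⟩ := hx
      exact (Finset.prod_eq_zero (Finset.mem_univ i)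
        (Set.indicator_of_notMem hi f)).symm
  rw [lintegral_congr this, lintegral_pi_prod _ _ fun i => hf.indicator (hs i)]
  refine Finset.prod_congr rfl fun i _ => ?_
  rw [lintegral_indicator (hs i), ← withDensity_apply _ (hs i), h]

lemma card_strictMono_maps {n N : ℕ} :
    (Finset.univ.filter fun j : Fin n → Fin N => StrictMono j).card = N.choose n := by
  classical
  rw [show N.choose n = ((Finset.univ : Finset (Fin N)).powersetCard n).card from by
    rw [Finset.card_powersetCard, Finset.card_univ, Fintype.card_fin]]
  refine Finset.card_bij' (fun j _ => Finset.univ.image j)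
    (fun s hs => s.orderEmbOfFin (by
      rw [Finset.mem_powersetCard] at hs; exact hs.2)) ?_ ?_ ?_ ?_
  · intro j hj
    rw [Finset.mem_filter] at hj
    rw [Finset.mem_powersetCard]
    exact ⟨Finset.subset_univ _, by
      rw [Finset.card_image_of_injective _ hj.2.injective, Finset.card_univ,
        Fintype.card_fin]⟩
  · intro s hs
    simp only [Finset.mem_filter, Finset.mem_univ, true_and]
    exact (s.orderEmbOfFin _).strictMono
  · intro j hj
    rw [Finset.mem_filter] at hj
    refine (Finset.orderEmbOfFin_unique (f := j) _ (fun i => ?_) hj.2).symm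
    exact Finset.mem_image_of_mem _ (Finset.mem_univ i)
  · intro s hs
    rw [Finset.mem_powersetCard] at hs
    ext k
    simp only [Finset.mem_image, Finset.mem_univ, true_and]
    constructor
    · rintro ⟨i, rfl⟩; exact Finset.orderEmbOfFin_mem s _ i
    · intro hk
      obtain ⟨i, hi⟩ := (s.orderIsoOfFin hs.2).surjective ⟨k, hk⟩
      exact ⟨i, congrArg Subtype.val hi⟩

end Aux

/-- (Gibbs–de Finetti lower bound.) For every probability measure `μ ≪ α`
(with finite entropy and `Φ(μ) = μ^{⊗n}(φ)` finite) and every `N ≥ n`,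
`p(N) ≥ g(μ) = S₁(μ) − Φ(μ)`, where `S₁(μ) = −∫ (dμ/dα) log(dμ/dα) dα`. -/
theorem gibbs_deFinetti_lower_bound
    {Ω : Type*} [MetricSpace Ω] [CompactSpace Ω] [MeasurableSpace Ω] [BorelSpace Ω]
    (α : Measure Ω) [IsProbabilityMeasure α] (n : ℕ) (hn : 1 ≤ n)
    (φ : (Fin n → Ω) → EReal) (hmeas : Measurable φ)
    (c : ℝ) (hlb : ∀ y, (c : EReal) ≤ φ y)
    (hsym : ∀ (σ : Equiv.Perm (Fin n)) (y : Fin n → Ω), φ (y ∘ σ) = φ y)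
    (hfin : (Measure.pi fun _ : Fin n => α) {y | φ y = ⊤} = 0)
    (hint : Integrable (fun y => (φ y).toReal) (Measure.pi fun _ : Fin n => α))
    (p : ℕ → ℝ)
    (hp : ∀ N : ℕ, p N = (N : ℝ)⁻¹ * Real.log ((∫⁻ x : Fin N → Ω,
        expNeg ((((N : ℝ) / (N.choose n : ℝ) : ℝ) : EReal) *
          ∑ j : Fin n → Fin N, (if StrictMono j then φ (x ∘ j) else 0))
        ∂(Measure.pi fun (_ : Fin N) => α)).toReal))
    (μ : Measure Ω) [IsProbabilityMeasure μ] (hacμ : μ ≪ α)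
    (hSint : Integrable (fun x => Real.negMulLog ((μ.rnDeriv α x).toReal)) α)
    (hΦfin : (Measure.pi fun _ : Fin n => μ) {y | φ y = ⊤} = 0)
    (hΦint : Integrable (fun y => (φ y).toReal) (Measure.pi fun _ : Fin n => μ)) :
    ∀ N : ℕ, n ≤ N →
      (∫ x, Real.negMulLog ((μ.rnDeriv α x).toReal) ∂α)
        - (∫ y, (φ y).toReal ∂(Measure.pi fun _ : Fin n => μ)) ≤ p N := by
  intro N hN
  classical
  have hN1 : 1 ≤ N := hn.trans hN
  have hKpos : 0 < N.choose n := Nat.choose_pos hN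
  set K : ℝ := (N.choose n : ℝ) with hKdef
  have hKpos' : (0 : ℝ) < K := by rw [hKdef]; exact_mod_cast hKpos
  set r : ℝ := (N : ℝ) / K with hrdef
  have hNpos : (0 : ℝ) < (N : ℝ) := by exact_mod_cast hN1
  have hrpos : 0 < r := div_pos hNpos hKpos'
  -- basic objects
  set f : Ω → ℝ≥0∞ := μ.rnDeriv α with hfdef
  have hfm : Measurable f := Measure.measurable_rnDeriv μ α
  have hwd : α.withDensity f = μ := Measure.withDensity_rnDeriv_eq μ α hacμ
  set β : Measure (Fin N → Ω) := Measure.pi fun _ => α with hβ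
  set ν : Measure (Fin N → Ω) := Measure.pi fun _ => μ with hν
  set πμ : Measure (Fin n → Ω) := Measure.pi fun _ : Fin n => μ with hπμ
  set S : ℝ := ∫ x, Real.negMulLog ((f x).toReal) ∂α with hSdef
  set Φ : ℝ := ∫ y, (φ y).toReal ∂πμ with hΦdef
  have hcomp : ∀ j : Fin n → Fin N, Measurable fun x : Fin N → Ω => x ∘ j :=
    fun j => measurable_pi_lambda _ fun i => measurable_pi_apply (j i)
  have hφnb : ∀ y, φ y ≠ ⊥ := by
    intro y hy
    have := hlb y
    rw [hy, le_bot_iff] at this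
    exact EReal.coe_ne_bot c this
  have hφtm : Measurable fun y : Fin n → Ω => (φ y).toReal :=
    measurable_ereal_toReal.comp hmeas
  have hφtopm : MeasurableSet {y : Fin n → Ω | φ y = ⊤} := hmeas (measurableSet_singleton ⊤)
  -- the set T and functions u, D, E, g
  set T : Set (Fin N → Ω) :=
    {x | ∃ j : Fin n → Fin N, StrictMono j ∧ φ (x ∘ j) = ⊤} with hT
  have hTm : MeasurableSet T := by
    have : T = ⋃ j : Fin n → Fin N, ⋃ _h : StrictMono j,
        (fun x : Fin N → Ω => x ∘ j) ⁻¹' {y | φ y = ⊤} := by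
      ext x
      simp [hT, Set.mem_iUnion]
    rw [this]
    exact MeasurableSet.iUnion fun j => MeasurableSet.iUnion fun _ => (hcomp j) hφtopm
  set u : (Fin N → Ω) → ℝ :=
    fun x => ∑ j : Fin n → Fin N, if StrictMono j then (φ (x ∘ j)).toReal else 0 with hu
  have hum : Measurable u := by
    refine Finset.measurable_sum _ fun j _ => ?_
    by_cases hj : StrictMono j
    · simp only [if_pos hj]
      exact hφtm.comp (hcomp j)
    · simp only [if_neg hj]
      exact measurable_const
  set D : (Fin N → Ω) → ℝ≥0∞ := fun x => ∏ i, f (x i) with hD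
  have hDm : Measurable D :=
    Finset.measurable_prod _ fun i _ => hfm.comp (measurable_pi_apply i)
  set E : (Fin N → Ω) → ℝ≥0∞ :=
    fun x => if x ∈ T then 0 else ENNReal.ofReal (Real.exp (-(r * u x))) with hE
  have hEm : Measurable E := by
    refine Measurable.ite hTm measurable_const ?_
    exact ENNReal.measurable_ofReal.comp (Real.measurable_exp.comp (hum.const_mul r).neg)
  set g : (Fin N → Ω) → ℝ :=
    fun x => -(r * u x) - ∑ i : Fin N, Real.log ((f (x i)).toReal) with hg
  have hlogm : Measurable fun y : Ω => Real.log ((f y).toReal) :=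
    Real.measurable_log.comp hfm.ennreal_toReal
  have hgm : Measurable g :=
    ((hum.const_mul r).neg).sub
      (Finset.measurable_sum _ fun i _ => hlogm.comp (measurable_pi_apply i))
  -- pointwise rewrite of the integrand of Z
  have hkey : ∀ x : Fin N → Ω,
      expNeg ((((N : ℝ) / (N.choose n : ℝ) : ℝ) : EReal) *
        ∑ j : Fin n → Fin N, (if StrictMono j then φ (x ∘ j) else 0)) = E x := by
    intro x
    have hnb : ∀ j : Fin n → Fin N, (if StrictMono j then φ (x ∘ j) else 0) ≠ ⊥ := by
      intro j
      by_cases hj : StrictMono j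
      · simp only [if_pos hj]; exact hφnb _
      · simp only [if_neg hj]; exact EReal.zero_ne_bot
    rw [expNeg_mul_sum _ hnb hrpos]
    have hiff : (∃ j : Fin n → Fin N, (if StrictMono j then φ (x ∘ j) else 0) = ⊤) ↔ x ∈ T := by
      constructor
      · rintro ⟨j, hj⟩
        by_cases hm : StrictMono j
        · rw [if_pos hm] at hj; exact ⟨j, hm, hj⟩
        · rw [if_neg hm] at hj; exact absurd hj EReal.zero_ne_top
      · rintro ⟨j, hm, hj⟩
        exact ⟨j, by rw [if_pos hm]; exact hj⟩
    have hsum : (∑ j : Fin n → Fin N, ((if StrictMono j then φ (x ∘ j) else 0) : EReal).toReal)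
        = u x := by
      refine Finset.sum_congr rfl fun j _ => ?_
      by_cases hj : StrictMono j <;> simp [hj]
    rw [hsum]
    exact if_congr hiff rfl rfl
  -- Z and its finiteness
  set Z : ℝ≥0∞ := ∫⁻ x : Fin N → Ω,
      expNeg ((((N : ℝ) / (N.choose n : ℝ) : ℝ) : EReal) *
        ∑ j : Fin n → Fin N, (if StrictMono j then φ (x ∘ j) else 0)) ∂β with hZ
  have hZE : Z = ∫⁻ x, E x ∂β := lintegral_congr hkey
  have hEbound : ∀ x, E x ≤ ENNReal.ofReal (Real.exp (r * (K * |c|))) := by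
    intro x
    by_cases hx : x ∈ T
    · rw [hE]; simp only [if_pos hx]; exact zero_le
    · rw [hE]; simp only [if_neg hx]
      refine ENNReal.ofReal_le_ofReal (Real.exp_le_exp.2 ?_)
      have hnt : ∀ j : Fin n → Fin N, StrictMono j → φ (x ∘ j) ≠ ⊤ := by
        intro j hj hc
        exact hx ⟨j, hj, hc⟩
      have h1 : K * c ≤ u x := by
        have : (∑ j : Fin n → Fin N, if StrictMono j then c else 0) ≤ u x := by
          refine Finset.sum_le_sum fun j _ => ?_
          by_cases hj : StrictMono j
          · simp only [if_pos hj]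
            have := EReal.toReal_le_toReal (hlb (x ∘ j)) (EReal.coe_ne_bot c) (hnt j hj)
            rwa [EReal.toReal_coe] at this
          · simp [hj]
        calc K * c = (∑ j : Fin n → Fin N, if StrictMono j then c else 0) := by
              rw [← Finset.sum_filter, Finset.sum_const, card_strictMono_maps,
                nsmul_eq_mul, hKdef]
          _ ≤ u x := this
      have hA : r * (K * c) ≤ r * u x := mul_le_mul_of_nonneg_left h1 hrpos.le
      have hB : K * (-c) ≤ K * |c| := mul_le_mul_of_nonneg_left (neg_le_abs c) hKpos'.le
      have hC : r * (K * (-c)) ≤ r * (K * |c|) := mul_le_mul_of_nonneg_left hB hrpos.le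
      linarith
  have hZfin : Z ≠ ⊤ := by
    rw [hZE]
    refine ne_of_lt (lt_of_le_of_lt (lintegral_mono hEbound) ?_)
    rw [lintegral_const]
    have : β Set.univ = 1 := measure_univ
    rw [this, mul_one]
    exact ENNReal.ofReal_lt_top
  -- ν as density against β
  have hνβ : ν = β.withDensity D := pi_withDensity α μ hfm hwd
  -- W and W ≤ Z
  set W : ℝ≥0∞ := ∫⁻ x, E x * (D x)⁻¹ ∂ν with hW
  have hWZ : W ≤ Z := by
    rw [hW, hZE, hνβ, lintegral_withDensity_eq_lintegral_mul β hDm (g := fun x => E x * (D x)⁻¹) (hEm.mul hDm.inv)]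
    refine lintegral_mono fun x => ?_
    calc (D * fun x => E x * (D x)⁻¹) x = E x * (D x * (D x)⁻¹) := by
          simp only [Pi.mul_apply]; ring
      _ ≤ E x * 1 := mul_le_mul_right (ENNReal.mul_inv_le_one _) _
      _ = E x := mul_one _
  have hWfin : W ≠ ⊤ := (lt_of_le_of_lt hWZ hZfin.lt_top).ne
  -- a.e. facts
  have hT0 : ν T = 0 := by
    have hsub : T ⊆ ⋃ j : Fin n → Fin N, ⋃ _h : StrictMono j,
        (fun x : Fin N → Ω => x ∘ j) ⁻¹' {y | φ y = ⊤} := by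
      rintro x ⟨j, hj, hx⟩
      exact Set.mem_iUnion.2 ⟨j, Set.mem_iUnion.2 ⟨hj, hx⟩⟩
    refine measure_mono_null hsub (measure_iUnion_null fun j => measure_iUnion_null fun hj => ?_)
    rw [hν, ← Measure.map_apply (hcomp j) hφtopm, map_comp_pi μ j hj.injective]
    exact hΦfin
  have hnotT : ∀ᵐ x ∂ν, x ∉ T := by
    rw [ae_iff]
    simpa [not_not] using hT0
  have hbadm : MeasurableSet {y : Ω | f y = 0 ∨ f y = ∞} :=
    (hfm (measurableSet_singleton 0)).union (hfm (measurableSet_singleton ∞))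
  have hbad : μ {y | f y = 0 ∨ f y = ∞} = 0 := by
    have h0 : μ {y | f y = 0} = 0 := by
      have hset0 : MeasurableSet {y | f y = 0} := hfm (measurableSet_singleton 0)
      rw [← hwd, withDensity_apply _ hset0]
      rw [setLIntegral_congr_fun hset0 (g := fun _ => 0) (fun y (hy : f y = 0) => hy)]
      simp
    have h2 : μ {y | f y = ∞} = 0 := by
      refine hacμ ?_
      have := Measure.rnDeriv_lt_top μ α
      rw [ae_iff] at this
      simpa only [not_lt, top_le_iff] using this
    rw [Set.setOf_or]
    exact measure_union_null h0 h2
  have hgood : ∀ᵐ x ∂ν, ∀ i, f (x i) ≠ 0 ∧ f (x i) ≠ ∞ := by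
    rw [ae_all_iff]
    intro i
    rw [ae_iff]
    have hset : {x : Fin N → Ω | ¬(f (x i) ≠ 0 ∧ f (x i) ≠ ∞)}
        = (fun x : Fin N → Ω => x i) ⁻¹' {y | f y = 0 ∨ f y = ∞} := by
      ext x; simp only [Set.mem_setOf_eq, Set.mem_preimage, not_and_or, not_not]
    rw [hset, hν, ← Measure.map_apply (measurable_pi_apply i) hbadm, pi_map_eval μ i, hbad]
  -- main a.e. identity
  have hae_main : ∀ᵐ x ∂ν, E x * (D x)⁻¹ = ENNReal.ofReal (Real.exp (g x)) := by
    filter_upwards [hnotT, hgood] with x hxT hxg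
    have hD0 : D x ≠ 0 := by
      rw [hD]
      intro hc
      obtain ⟨i, _, h0⟩ := Finset.prod_eq_zero_iff.1 hc
      exact (hxg i).1 h0
    have hDtop : D x ≠ ∞ := by
      rw [hD]
      exact (ENNReal.prod_lt_top fun i _ => lt_top_iff_ne_top.2 (hxg i).2).ne
    have htR : 0 < (D x).toReal := ENNReal.toReal_pos hD0 hDtop
    have hlogD : Real.log ((D x).toReal) = ∑ i : Fin N, Real.log ((f (x i)).toReal) := by
      rw [hD]
      rw [ENNReal.toReal_prod]
      exact Real.log_prod fun i _ =>
        fun hc => (hxg i).elim (fun h1 h2 => by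
          rcases (ENNReal.toReal_eq_zero_iff _).1 hc with h | h
          exacts [h1 h, h2 h])
    have hDinv : (D x)⁻¹ = ENNReal.ofReal (Real.exp (-(Real.log ((D x).toReal)))) := by
      rw [Real.exp_neg, Real.exp_log htR, ENNReal.ofReal_inv_of_pos htR,
        ENNReal.ofReal_toReal hDtop]
    rw [hE]
    simp only [if_neg hxT]
    rw [hDinv, ← ENNReal.ofReal_mul (Real.exp_nonneg _), ← Real.exp_add]
    congr 1
    rw [hg, hlogD]
    ring_nf
  have hWg : W = ∫⁻ x, ENNReal.ofReal (Real.exp (g x)) ∂ν := lintegral_congr_ae hae_main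
  -- integrability of u, and its integral
  have hmapj : ∀ j : Fin n → Fin N, StrictMono j →
      Measure.map (fun x : Fin N → Ω => x ∘ j) ν = πμ :=
    fun j hj => map_comp_pi μ j hj.injective
  have hjint : ∀ j : Fin n → Fin N, StrictMono j →
      Integrable (fun x : Fin N → Ω => (φ (x ∘ j)).toReal) ν := by
    intro j hj
    have h1 : Integrable (fun y => (φ y).toReal)
        (Measure.map (fun x : Fin N → Ω => x ∘ j) ν) := by
      rw [hmapj j hj]; exact hΦint
    exact (integrable_map_measure hφtm.aestronglyMeasurable (hcomp j).aemeasurable).1 h1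
  have hjeq : ∀ j : Fin n → Fin N, StrictMono j →
      ∫ x, (φ (x ∘ j)).toReal ∂ν = Φ := by
    intro j hj
    calc ∫ x, (φ (x ∘ j)).toReal ∂ν
        = ∫ y, (φ y).toReal ∂(Measure.map (fun x : Fin N → Ω => x ∘ j) ν) :=
          (integral_map (hcomp j).aemeasurable hφtm.aestronglyMeasurable).symm
      _ = Φ := by rw [hmapj j hj, hΦdef]
  have huterm : ∀ j : Fin n → Fin N,
      Integrable (fun x : Fin N → Ω => if StrictMono j then (φ (x ∘ j)).toReal else 0) ν := by
    intro j
    by_cases hj : StrictMono j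
    · simpa only [if_pos hj] using hjint j hj
    · simp only [if_neg hj]
      exact integrable_zero _ _ _
  have huint : Integrable u ν := by
    rw [hu]
    exact integrable_finset_sum _ fun j _ => huterm j
  have hIu : ∫ x, u x ∂ν = K * Φ := by
    rw [hu, integral_finset_sum _ fun j _ => huterm j]
    have : ∀ j : Fin n → Fin N,
        ∫ x, (if StrictMono j then (φ (x ∘ j)).toReal else 0) ∂ν
          = if StrictMono j then Φ else 0 := by
      intro j
      by_cases hj : StrictMono j
      · simp only [if_pos hj]; exact hjeq j hj
      · simp only [if_neg hj, integral_zero]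
    rw [Finset.sum_congr rfl fun j _ => this j, ← Finset.sum_filter, Finset.sum_const,
      card_strictMono_maps, nsmul_eq_mul, hKdef]
  -- integrability of logs and their integrals
  have hmapev : ∀ i : Fin N, Measure.map (fun x : Fin N → Ω => x i) ν = μ :=
    fun i => pi_map_eval μ i
  have hlogμ : Integrable (fun y => Real.log ((f y).toReal)) μ := by
    rw [← integrable_rnDeriv_smul_iff hacμ]
    have heq : (fun x => (μ.rnDeriv α x).toReal • Real.log ((f x).toReal))
        = fun x => - Real.negMulLog ((f x).toReal) := by
      ext x
      rw [hfdef]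
      simp [Real.negMulLog, smul_eq_mul]
    rw [heq]
    exact hSint.neg
  have hlogint : ∀ i : Fin N,
      Integrable (fun x : Fin N → Ω => Real.log ((f (x i)).toReal)) ν := by
    intro i
    have h1 : Integrable (fun y => Real.log ((f y).toReal))
        (Measure.map (fun x : Fin N → Ω => x i) ν) := by
      rw [hmapev i]; exact hlogμ
    exact (integrable_map_measure hlogm.aestronglyMeasurable
      (measurable_pi_apply i).aemeasurable).1 h1
  have hlogeq : ∀ i : Fin N, ∫ x, Real.log ((f (x i)).toReal) ∂ν = -S := by
    intro i
    have h1 : ∫ x, Real.log ((f (x i)).toReal) ∂ν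
        = ∫ y, Real.log ((f y).toReal) ∂μ := by
      rw [← hmapev i, integral_map (measurable_pi_apply i).aemeasurable
        hlogm.aestronglyMeasurable]
    rw [h1, ← integral_rnDeriv_smul hacμ (f := fun y => Real.log ((f y).toReal))]
    rw [hSdef, ← integral_neg]
    refine integral_congr_ae (ae_of_all _ fun x => ?_)
    rw [hfdef]
    simp [Real.negMulLog, smul_eq_mul]
  -- integrability and integral of g
  have hgint : Integrable g ν := by
    rw [hg]
    exact ((huint.const_mul r).neg).sub (integrable_finset_sum _ fun i _ => hlogint i)
  have hIg : ∫ x, g x ∂ν = (N : ℝ) * (S - Φ) := by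
    have h1 : Integrable (fun x : Fin N → Ω => -(r * u x)) ν := (huint.const_mul r).neg
    rw [hg]
    rw [integral_sub h1 (integrable_finset_sum _ fun i _ => hlogint i)]
    rw [integral_neg, integral_const_mul, hIu,
      integral_finset_sum _ fun i _ => hlogint i]
    rw [Finset.sum_congr rfl fun i _ => hlogeq i, Finset.sum_const, Finset.card_univ,
      Fintype.card_fin, nsmul_eq_mul]
    have hrK : r * K = (N : ℝ) := by
      rw [hrdef]
      field_simp
    have : r * (K * Φ) = (N : ℝ) * Φ := by
      rw [← mul_assoc, hrK]
    rw [this]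
    ring
  -- exp ∘ g is integrable
  have hexpnn : (0 : (Fin N → Ω) → ℝ) ≤ᶠ[ae ν] fun x => Real.exp (g x) :=
    ae_of_all _ fun x => by simpa using (Real.exp_pos (g x)).le
  have hexpint : Integrable (fun x => Real.exp (g x)) ν := by
    refine ⟨(Real.measurable_exp.comp hgm).aestronglyMeasurable, ?_⟩
    rw [hasFiniteIntegral_iff_ofReal hexpnn]
    rw [← hWg]
    exact hWfin.lt_top
  -- Jensen
  have hjensen : Real.exp (∫ x, g x ∂ν) ≤ ∫ x, Real.exp (g x) ∂ν := by
    have h := convexOn_exp.map_average_le Real.continuous_exp.continuousOn isClosed_univ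
      (ae_of_all _ fun x : Fin N → Ω => Set.mem_univ (g x)) hgint hexpint
    rwa [average_eq_integral, average_eq_integral] at h
  have hexpW : ∫ x, Real.exp (g x) ∂ν = W.toReal := by
    rw [integral_eq_lintegral_of_nonneg_ae hexpnn
      (Real.measurable_exp.comp hgm).aestronglyMeasurable, ← hWg]
  have hfinal : Real.exp ((N : ℝ) * (S - Φ)) ≤ Z.toReal := by
    calc Real.exp ((N : ℝ) * (S - Φ)) = Real.exp (∫ x, g x ∂ν) := by rw [hIg]
      _ ≤ ∫ x, Real.exp (g x) ∂ν := hjensen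
      _ = W.toReal := hexpW
      _ ≤ Z.toReal := ENNReal.toReal_mono hZfin hWZ
  have hZpos : 0 < Z.toReal := lt_of_lt_of_le (Real.exp_pos _) hfinal
  have hlog : (N : ℝ) * (S - Φ) ≤ Real.log Z.toReal :=
    (Real.le_log_iff_exp_le hZpos).2 hfinal
  rw [hp N]
  calc S - Φ = (N : ℝ)⁻¹ * ((N : ℝ) * (S - Φ)) := by field_simp
    _ ≤ (N : ℝ)⁻¹ * Real.log Z.toReal :=
        mul_le_mul_of_nonneg_left hlog (inv_nonneg.2 hNpos.le)
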